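/- If P(Y1=1) > 2·P(Y0=1) (i.e. the risk ratio RR > 2), then P(Y0=0 | Y1=1) > 1/2. -/
import Mathlib

open MeasureTheory

theorem pc_balance_of_probabilities {Ω : Type*} [MeasurableSpace Ω] (P : Measure Ω)
    [IsProbabilityMeasure P] (Y0 Y1 : Ω → Bool)
    (hY0 : Measurable Y0) (hY1 : Measurable Y1)
    (hpos1 : 0 < (P {ω | Y1 ω = true}).toReal)
    (hpos0 : 0 < (P {ω | Y0 ω = true}).toReal)
    (hRR : (P {ω | Y1 ω = true}).toReal > 2 * (P {ω | Y0 ω = true}).toReal) :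
    (P ({ω | Y0 ω = false} ∩ {ω | Y1 ω = true})).toReal / (P {ω | Y1 ω = true}).toReal
      > 1 / 2 := by
  have hsub : {ω | Y1 ω = true} ⊆ ({ω | Y0 ω = false} ∩ {ω | Y1 ω = true}) ∪ {ω | Y0 ω = true} := by
    intro ω hω
    by_cases h : Y0 ω = true
    · exact Or.inr h
    · exact Or.inl ⟨by simpa using h, hω⟩
  have hle : P {ω | Y1 ω = true} ≤ P ({ω | Y0 ω = false} ∩ {ω | Y1 ω = true}) + P {ω | Y0 ω = true} :=
    (measure_mono hsub).trans (measure_union_le _ _)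
  have h1 : P {ω | Y1 ω = true} ≠ ⊤ := measure_ne_top _ _
  have h2 : P ({ω | Y0 ω = false} ∩ {ω | Y1 ω = true}) ≠ ⊤ := measure_ne_top _ _
  have h3 : P {ω | Y0 ω = true} ≠ ⊤ := measure_ne_top _ _
  have hleR : (P {ω | Y1 ω = true}).toReal ≤
      (P ({ω | Y0 ω = false} ∩ {ω | Y1 ω = true})).toReal + (P {ω | Y0 ω = true}).toReal := by
    have := ENNReal.toReal_mono (by simp [h2, h3]) hle
    simpa [ENNReal.toReal_add h2 h3] using this
  rw [gt_iff_lt, div_lt_div_iff₀ (by norm_num) hpos1] at *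
  nlinarith
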